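/- Let 𝔤 = V₁ ⊕ ⋯ ⊕ V_s be a stratified real Lie algebra of step s ≥ 2 and rank m, and suppose 𝔤 is hypergenerated of order k. Then m ≥ 2(k+1). -/

import Mathlib

/-- The submodule of a Lie algebra spanned by brackets of elements of two submodules. -/
def bracketSpan {L : Type*} [LieRing L] [LieAlgebra ℝ L] (A B : Submodule ℝ L) :
    Submodule ℝ L :=
  Submodule.span ℝ {z | ∃ x ∈ A, ∃ y ∈ B, ⁅x, y⁆ = z}

/-- The commutator submodule `[𝔤, 𝔤]` of a Lie algebra. -/
def commutatorSubmodule (L : Type*) [LieRing L] [LieAlgebra ℝ L] : Submodule ℝ L :=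
  bracketSpan (⊤ : Submodule ℝ L) ⊤

/-- A family `V` of submodules of a real Lie algebra `L` is a stratification of step `s` if
`L = V 1 ⊕ ⋯ ⊕ V s`, `[V 1, V (i-1)] = V i` for `2 ≤ i ≤ s`, `V s ≠ 0` and `[V 1, V s] = 0`.
We also require `V i = 0` for `i = 0` and `i > s`. -/
structure IsStratification (L : Type*) [LieRing L] [LieAlgebra ℝ L]
    (V : ℕ → Submodule ℝ L) (s : ℕ) : Prop where
  one_le_step : 1 ≤ s
  isInternal : DirectSum.IsInternal (fun i : Fin s => V (i.1 + 1))
  bracket_eq : ∀ i, 2 ≤ i → i ≤ s → bracketSpan (V 1) (V (i - 1)) = V i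
  last_ne_bot : V s ≠ ⊥
  bracket_last_eq_bot : bracketSpan (V 1) (V s) = ⊥
  zero_eq_bot : V 0 = ⊥
  eq_bot_of_gt : ∀ i, s < i → V i = ⊥

/-- A stratified real Lie algebra with strata `V` and rank `m = dim (V 1)` is hypergenerated of
order `k` if every subspace `P ⊆ V 1` with `dim P = m - k` satisfies `[𝔤,𝔤] ⊆ Lie(P)`. -/
def IsHypergenerated (L : Type*) [LieRing L] [LieAlgebra ℝ L]
    (V : ℕ → Submodule ℝ L) (k : ℕ) : Prop :=
  ∀ P : Submodule ℝ L, P ≤ V 1 →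
    Module.finrank ℝ P = Module.finrank ℝ (V 1) - k →
    commutatorSubmodule L ≤ (LieSubalgebra.lieSpan ℝ L (P : Set L)).toSubmodule

/-- Any nonzero vector admits a functional not vanishing on it. -/
theorem exists_dual_ne_zero_aux {E : Type*} [AddCommGroup E] [Module ℝ E] {v : E} (hv : v ≠ 0) :
    ∃ g : Module.Dual ℝ E, g v ≠ 0 := by
  by_contra hc
  push_neg at hc
  exact hv ((Module.forall_dual_apply_eq_zero_iff ℝ v).1 hc)

/-- Every alternating bilinear form admits isotropic subspaces of any dimension `d` with
`2d ≤ dim U + 1`, inside any given subspace `U`. -/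
theorem exists_isotropic_aux {E : Type*} [AddCommGroup E] [Module ℝ E] [FiniteDimensional ℝ E]
    (B : E →ₗ[ℝ] E →ₗ[ℝ] ℝ) (hB : ∀ x, B x x = 0) :
    ∀ (d : ℕ) (U : Submodule ℝ E), 2 * d ≤ Module.finrank ℝ U + 1 →
      ∃ P : Submodule ℝ E, P ≤ U ∧ Module.finrank ℝ P = d ∧
        ∀ x ∈ P, ∀ y ∈ P, B x y = 0 := by
  have hskew : ∀ x y : E, B x y = - B y x := by
    intro x y
    have h := hB (x + y)
    simp only [map_add, LinearMap.add_apply, hB] at h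
    linarith
  intro d
  induction d with
  | zero =>
    intro U _
    exact ⟨⊥, bot_le, by simp, by simp⟩
  | succ d ih =>
    intro U hU
    have h1 : 1 ≤ Module.finrank ℝ U := by omega
    obtain ⟨v, hvU, hv0⟩ : ∃ v ∈ U, v ≠ 0 := by
      rw [← Submodule.ne_bot_iff]
      intro hb
      rw [hb] at h1
      simp at h1
    obtain ⟨g, hg⟩ := exists_dual_ne_zero_aux hv0
    set N : Submodule ℝ E := U ⊓ LinearMap.ker (B v) with hN
    set Wm : Submodule ℝ E := N ⊓ LinearMap.ker g with hWm
    have hrankN : Module.finrank ℝ U ≤ Module.finrank ℝ N + 1 := by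
      have h2 := Submodule.finrank_sup_add_finrank_inf_eq U (LinearMap.ker (B v))
      rw [← hN] at h2
      have h3 := LinearMap.finrank_range_add_finrank_ker (B v)
      have h4 : Module.finrank ℝ (LinearMap.range (B v)) ≤ 1 := by
        have := Submodule.finrank_le (LinearMap.range (B v))
        simpa using this
      have h5 : Module.finrank ℝ ↥(U ⊔ LinearMap.ker (B v)) ≤ Module.finrank ℝ E :=
        Submodule.finrank_le _
      have h6 : Module.finrank ℝ (LinearMap.ker (B v)) ≤ Module.finrank ℝ E :=
        Submodule.finrank_le _
      omega
    have hrankW : Module.finrank ℝ N ≤ Module.finrank ℝ Wm + 1 := by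
      have h2 := Submodule.finrank_sup_add_finrank_inf_eq N (LinearMap.ker g)
      rw [← hWm] at h2
      have h3 := LinearMap.finrank_range_add_finrank_ker g
      have h4 : Module.finrank ℝ (LinearMap.range g) ≤ 1 := by
        have := Submodule.finrank_le (LinearMap.range g)
        simpa using this
      have h5 : Module.finrank ℝ ↥(N ⊔ LinearMap.ker g) ≤ Module.finrank ℝ E :=
        Submodule.finrank_le _
      have h6 : Module.finrank ℝ (LinearMap.ker g) ≤ Module.finrank ℝ E :=
        Submodule.finrank_le _
      omega
    obtain ⟨P', hP'le, hP'rank, hP'iso⟩ := ih Wm (by omega)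
    have hP'U : P' ≤ U := hP'le.trans (inf_le_left.trans inf_le_left)
    have hP'ker : P' ≤ LinearMap.ker (B v) := hP'le.trans (inf_le_left.trans inf_le_right)
    have hvP' : v ∉ P' := by
      intro hmem
      exact hg ((hP'le.trans inf_le_right) hmem)
    refine ⟨P' ⊔ Submodule.span ℝ {v}, ?_, ?_, ?_⟩
    · exact sup_le hP'U ((Submodule.span_singleton_le_iff_mem v U).2 hvU)
    · have hdisj : P' ⊓ Submodule.span ℝ {v} = ⊥ := by
        rw [eq_bot_iff]
        rintro x ⟨hx1, hx2⟩
        obtain ⟨c, rfl⟩ := Submodule.mem_span_singleton.1 hx2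
        rcases eq_or_ne c 0 with rfl | hc
        · simp
        · exact absurd (Submodule.smul_mem_iff P' hc |>.1 hx1) hvP'
      have h2 := Submodule.finrank_sup_add_finrank_inf_eq P' (Submodule.span ℝ {v})
      rw [hdisj] at h2
      rw [finrank_span_singleton hv0] at h2
      simpa [hP'rank] using h2
    · intro x hx y hy
      obtain ⟨a, ha, b, hb, rfl⟩ := Submodule.mem_sup.1 hx
      obtain ⟨a', ha', b', hb', rfl⟩ := Submodule.mem_sup.1 hy
      obtain ⟨c, rfl⟩ := Submodule.mem_span_singleton.1 hb
      obtain ⟨c', rfl⟩ := Submodule.mem_span_singleton.1 hb'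
      have e1 : B a a' = 0 := hP'iso a ha a' ha'
      have e2 : B v a' = 0 := by
        have := hP'ker ha'
        rwa [LinearMap.mem_ker] at this
      have e3 : B a v = 0 := by
        rw [hskew]
        have := hP'ker ha
        rw [LinearMap.mem_ker] at this
        rw [this]; ring
      simp only [map_add, map_smul, LinearMap.add_apply, LinearMap.smul_apply,
        LinearMap.map_smul, e1, e2, e3, hB, smul_eq_mul]
      ring

/-- Splitting an `iSup` at one index. -/
theorem iSup_split_aux {α ι : Type*} [CompleteLattice α] (f : ι → α) (i : ι) :
    iSup f = f i ⊔ ⨆ j ∈ {j | j ≠ i}, f j := by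
  apply le_antisymm
  · apply iSup_le
    intro j
    by_cases hj : j = i
    · subst hj; exact le_sup_left
    · exact le_sup_of_le_right (le_biSup f hj)
  · exact sup_le (le_iSup f i) (iSup_le fun j => iSup_le fun _ => le_iSup f j)

/-- If a stratified real Lie algebra `𝔤 = V₁ ⊕ ⋯ ⊕ V_s` of step `s ≥ 2`
and rank `m` is hypergenerated of order `k`, then `m ≥ 2(k+1)`. -/
theorem rank_ge_of_isHypergenerated {L : Type*} [LieRing L] [LieAlgebra ℝ L]
    [FiniteDimensional ℝ L] (V : ℕ → Submodule ℝ L) (s m k : ℕ) (hs : 2 ≤ s)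
    (hst : IsStratification L V s) (hm : Module.finrank ℝ (V 1) = m)
    (h : IsHypergenerated L V k) :
    2 * (k + 1) ≤ m := by
  by_contra hc
  push_neg at hc
  have hmk : m ≤ 2 * k + 1 := by omega
  obtain ⟨hs1, hint, hbr, hVs, hlast, hV0, hgt⟩ := hst
  -- The base case of the grading: brackets of `V 1` with `V j` land in `V (1 + j)`.
  have base1 : ∀ j, 1 ≤ j → ∀ x ∈ V 1, ∀ y ∈ V j, ⁅x, y⁆ ∈ V (1 + j) := by
    intro j hj x hx y hy
    rcases lt_or_ge j s with hjs | hjs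
    · have hb := hbr (j + 1) (by omega) (by omega)
      have hmem : ⁅x, y⁆ ∈ bracketSpan (V 1) (V (j + 1 - 1)) :=
        Submodule.subset_span ⟨x, hx, y, hy, rfl⟩
      rw [hb] at hmem
      rwa [Nat.add_comm]
    · rcases eq_or_lt_of_le hjs with hje | hjl
      · subst hje
        have hmem : ⁅x, y⁆ ∈ bracketSpan (V 1) (V s) :=
          Submodule.subset_span ⟨x, hx, y, hy, rfl⟩
        rw [hlast, Submodule.mem_bot] at hmem
        rw [hmem]
        exact zero_mem _
      · have hy0 : y = 0 := by
          rw [hgt j hjl, Submodule.mem_bot] at hy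
          exact hy
        rw [hy0, lie_zero]
        exact zero_mem _
  -- The grading property: `⁅V i, V j⁆ ⊆ V (i + j)`.
  have grading : ∀ i, 1 ≤ i → ∀ j, 1 ≤ j → ∀ x ∈ V i, ∀ y ∈ V j, ⁅x, y⁆ ∈ V (i + j) := by
    intro i hi
    induction i, hi using Nat.le_induction with
    | base => exact base1
    | succ i hi ih =>
      intro j hj x hx y hy
      rcases le_or_gt (i + 1) s with his | his
      · have hb := hbr (i + 1) (by omega) his
        rw [show i + 1 - 1 = i from rfl] at hb
        rw [← hb] at hx
        induction hx using Submodule.span_induction with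
        | mem z hz =>
          obtain ⟨a, haV, u, huV, rfl⟩ := hz
          rw [lie_lie]
          have t1 : ⁅u, y⁆ ∈ V (i + j) := ih j hj u huV y hy
          have t2 : ⁅a, ⁅u, y⁆⁆ ∈ V (1 + (i + j)) := base1 (i + j) (by omega) a haV _ t1
          have t3 : ⁅a, y⁆ ∈ V (1 + j) := base1 j hj a haV y hy
          have t4 : ⁅u, ⁅a, y⁆⁆ ∈ V (i + (1 + j)) := ih (1 + j) (by omega) u huV _ t3
          rw [show 1 + (i + j) = i + 1 + j by omega] at t2
          rw [show i + (1 + j) = i + 1 + j by omega] at t4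
          exact sub_mem t2 t4
        | zero => rw [zero_lie]; exact zero_mem _
        | add a b _ _ pa pb => rw [add_lie]; exact add_mem pa pb
        | smul c a _ pa => rw [smul_lie]; exact Submodule.smul_mem _ _ pa
      · have hx0 : x = 0 := by
          rw [hgt _ his, Submodule.mem_bot] at hx
          exact hx
        rw [hx0, zero_lie]
        exact zero_mem _
  -- `V 2` is nonzero.
  have hV2ne : V 2 ≠ ⊥ := by
    intro h2
    apply hVs
    have key : ∀ j, 2 ≤ j → j ≤ s → V j = ⊥ := by
      intro j hj
      induction j, hj using Nat.le_induction with
      | base => intro _; exact h2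
      | succ j hj ih =>
        intro hjs
        have hVj : V j = ⊥ := ih (by omega)
        have hb := hbr (j + 1) (by omega) hjs
        rw [show j + 1 - 1 = j from rfl, hVj] at hb
        rw [← hb]
        simp only [bracketSpan]
        rw [Submodule.span_eq_bot]
        rintro z ⟨x, hx, y, hy, rfl⟩
        rw [Submodule.mem_bot] at hy
        rw [hy, lie_zero]
    exact key s hs le_rfl
  -- Construct a functional vanishing on all strata except `V 2`, nonzero on `V 2`.
  have h1s : 1 < s := hs
  set i1 : Fin s := ⟨1, h1s⟩ with hi1
  set f : Fin s → Submodule ℝ L := fun i => V (i.1 + 1) with hf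
  set Q : Submodule ℝ L := ⨆ j ∈ {j : Fin s | j ≠ i1}, f j with hQ
  have hfV2 : f i1 = V 2 := rfl
  have hdisj : Disjoint (V 2) Q := by
    have hd := hint.submodule_iSupIndep.disjoint_biSup
      (x := i1) (y := {j : Fin s | j ≠ i1}) (fun hm => hm rfl)
    exact hd
  have htop : V 2 ⊔ Q = ⊤ := by
    rw [← hint.submodule_iSup_eq_top]
    exact (iSup_split_aux f i1).symm
  have hcompl : IsCompl (V 2) Q := ⟨hdisj, codisjoint_iff.2 htop⟩
  obtain ⟨v₀, hv₀V, hv₀ne⟩ := (Submodule.ne_bot_iff _).1 hV2ne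
  obtain ⟨μ, hμ⟩ := exists_dual_ne_zero_aux
    (v := (⟨v₀, hv₀V⟩ : V 2)) (fun he => hv₀ne (congrArg Subtype.val he))
  set π := Submodule.linearProjOfIsCompl (V 2) Q hcompl with hπ
  set lam : L →ₗ[ℝ] ℝ := μ.comp π with hlam
  have hlamv₀ : lam v₀ ≠ 0 := by
    have hp : π v₀ = ⟨v₀, hv₀V⟩ :=
      Submodule.linearProjOfIsCompl_apply_left hcompl ⟨v₀, hv₀V⟩
    simpa [hlam, hp] using hμ
  have hVQ : ∀ j, 1 ≤ j → j ≤ s → j ≠ 2 → V j ≤ Q := by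
    intro j hj1 hj2 hj3
    have he : V j = f ⟨j - 1, by omega⟩ := by
      show V j = V (j - 1 + 1)
      congr 1
      omega
    rw [he]
    exact le_biSup f (fun he' => hj3 (by
      have hv := congrArg Fin.val he'
      simp only [hi1] at hv
      omega))
  have hlamV : ∀ j, j ≠ 2 → ∀ x ∈ V j, lam x = 0 := by
    intro j hj x hx
    rcases Nat.eq_zero_or_pos j with rfl | hj1
    · rw [hV0, Submodule.mem_bot] at hx
      rw [hx]
      simp
    rcases le_or_gt j s with hjs | hjs
    · have hxQ : x ∈ Q := hVQ j hj1 hjs hj hx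
      have hp : π x = 0 := Submodule.projectionOnto_apply_of_mem_right hcompl (x := x) hxQ
      simp [hlam, hp]
    · rw [hgt j hjs, Submodule.mem_bot] at hx
      rw [hx]
      simp
  -- The alternating form `B x y = lam ⁅x, y⁆`.
  set B : L →ₗ[ℝ] L →ₗ[ℝ] ℝ := LinearMap.mk₂ ℝ (fun x y => lam ⁅x, y⁆)
    (fun a b y => show lam ⁅a + b, y⁆ = lam ⁅a, y⁆ + lam ⁅b, y⁆ by rw [add_lie, map_add])
    (fun c a y => show lam ⁅c • a, y⁆ = c • lam ⁅a, y⁆ by rw [smul_lie, map_smul])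
    (fun x a b => show lam ⁅x, a + b⁆ = lam ⁅x, a⁆ + lam ⁅x, b⁆ by rw [lie_add, map_add])
    (fun c x a => show lam ⁅x, c • a⁆ = c • lam ⁅x, a⁆ by rw [lie_smul, map_smul]) with hB
  have hBapp : ∀ x y : L, B x y = lam ⁅x, y⁆ := fun x y => rfl
  have hBalt : ∀ x, B x x = 0 := fun x => by rw [hBapp, lie_self, map_zero]
  -- Find an isotropic subspace `P ≤ V 1` of dimension `m - k`.
  obtain ⟨P, hPU, hPrank, hPiso⟩ := exists_isotropic_aux B hBalt (m - k) (V 1)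
    (by rw [hm]; omega)
  -- The subalgebra `H = P ⊔ (V 2 ⊓ ker lam) ⊔ (V 3 ⊔ ⋯)`.
  set W : Submodule ℝ L := ⨆ t ∈ {t : ℕ | 3 ≤ t}, V t with hW
  have hVW : ∀ t, 3 ≤ t → V t ≤ W := fun t ht => le_biSup V ht
  have hWle : ∀ C : Submodule ℝ L, (∀ t, 3 ≤ t → V t ≤ C) → W ≤ C := by
    intro C hC
    rw [hW]
    exact iSup₂_le hC
  set K : Submodule ℝ L := V 2 ⊓ LinearMap.ker lam with hK
  set H : Submodule ℝ L := P ⊔ K ⊔ W with hH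
  have hWbr' : ∀ j, 1 ≤ j → ∀ y ∈ V j, ∀ w ∈ W, ⁅y, w⁆ ∈ W := by
    intro j hj y hy
    have hle : W ≤ Submodule.comap (LieAlgebra.ad ℝ L y) W := by
      apply hWle
      intro t ht w hw
      simp only [Submodule.mem_comap, LieAlgebra.ad_apply]
      exact hVW (j + t) (by omega) (grading j hj t (by omega) y hy w hw)
    intro w hw
    simpa only [Submodule.mem_comap, LieAlgebra.ad_apply] using hle hw
  have hWbr : ∀ j, 1 ≤ j → ∀ y ∈ V j, ∀ w ∈ W, ⁅w, y⁆ ∈ W := by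
    intro j hj y hy w hw
    rw [← lie_skew]
    exact neg_mem (hWbr' j hj y hy w hw)
  have hWW : ∀ w ∈ W, ∀ w' ∈ W, ⁅w, w'⁆ ∈ W := by
    intro w hw
    have hle : W ≤ Submodule.comap (LieAlgebra.ad ℝ L w) W := by
      apply hWle
      intro t ht y hy
      simp only [Submodule.mem_comap, LieAlgebra.ad_apply]
      exact hWbr t (by omega) y hy w hw
    intro w' hw'
    simpa only [Submodule.mem_comap, LieAlgebra.ad_apply] using hle hw'
  have hPH : P ≤ H := le_sup_left.trans le_sup_left
  have hKH : K ≤ H := le_sup_right.trans le_sup_left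
  have hWH : W ≤ H := le_sup_right
  -- `H` is closed under the bracket.
  have hHbr : ∀ x ∈ H, ∀ y ∈ H, ⁅x, y⁆ ∈ H := by
    intro x hx y hy
    rw [hH] at hx hy
    obtain ⟨u, hu, w, hw, rfl⟩ := Submodule.mem_sup.1 hx
    obtain ⟨p, hp, κ, hκ, rfl⟩ := Submodule.mem_sup.1 hu
    obtain ⟨u', hu', w', hw', rfl⟩ := Submodule.mem_sup.1 hy
    obtain ⟨p', hp', κ', hκ', rfl⟩ := Submodule.mem_sup.1 hu'
    have hp1 : p ∈ V 1 := hPU hp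
    have hp'1 : p' ∈ V 1 := hPU hp'
    have hκ2 : κ ∈ V 2 := hκ.1
    have hκ'2 : κ' ∈ V 2 := hκ'.1
    have t1 : ⁅p, p'⁆ ∈ H := by
      apply hKH
      rw [hK]
      refine Submodule.mem_inf.2 ⟨by simpa using grading 1 le_rfl 1 le_rfl p hp1 p' hp'1, ?_⟩
      rw [LinearMap.mem_ker]
      have := hPiso p hp p' hp'
      rwa [hBapp] at this
    have t2 : ⁅p, κ'⁆ ∈ H :=
      hWH (hVW 3 le_rfl (by simpa using grading 1 le_rfl 2 (by omega) p hp1 κ' hκ'2))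
    have t3 : ⁅p, w'⁆ ∈ H := hWH (hWbr' 1 le_rfl p hp1 w' hw')
    have t4 : ⁅κ, p'⁆ ∈ H :=
      hWH (hVW 3 le_rfl (by simpa using grading 2 (by omega) 1 le_rfl κ hκ2 p' hp'1))
    have t5 : ⁅κ, κ'⁆ ∈ H :=
      hWH (hVW 4 (by omega) (by simpa using grading 2 (by omega) 2 (by omega) κ hκ2 κ' hκ'2))
    have t6 : ⁅κ, w'⁆ ∈ H := hWH (hWbr' 2 (by omega) κ hκ2 w' hw')
    have t7 : ⁅w, p'⁆ ∈ H := hWH (hWbr 1 le_rfl p' hp'1 w hw)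
    have t8 : ⁅w, κ'⁆ ∈ H := hWH (hWbr 2 (by omega) κ' hκ'2 w hw)
    have t9 : ⁅w, w'⁆ ∈ H := hWH (hWW w hw w' hw')
    have expand : ⁅p + κ + w, p' + κ' + w'⁆ =
        ⁅p, p'⁆ + ⁅p, κ'⁆ + ⁅p, w'⁆ + (⁅κ, p'⁆ + ⁅κ, κ'⁆ + ⁅κ, w'⁆)
          + (⁅w, p'⁆ + ⁅w, κ'⁆ + ⁅w, w'⁆) := by
      simp only [add_lie, lie_add]
      abel
    rw [expand]
    exact add_mem (add_mem (add_mem (add_mem t1 t2) t3) (add_mem (add_mem t4 t5) t6))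
      (add_mem (add_mem t7 t8) t9)
  set H' : LieSubalgebra ℝ L := { H with lie_mem' := fun {x y} hx hy => hHbr x hx y hy }
    with hH'
  have hspan : LieSubalgebra.lieSpan ℝ L (P : Set L) ≤ H' :=
    (LieSubalgebra.lieSpan_le).2 (fun x hx => hPH hx)
  have hcomm := h P hPU (by rw [hPrank, hm])
  -- `v₀ ∈ V 2 ⊆ [𝔤, 𝔤]`.
  have hv₀comm : v₀ ∈ commutatorSubmodule L := by
    have hb2 := hbr 2 le_rfl hs
    have hle : V 2 ≤ commutatorSubmodule L := by
      rw [← hb2]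
      simp only [bracketSpan, commutatorSubmodule]
      apply Submodule.span_mono
      rintro z ⟨x, _, y, _, rfl⟩
      exact ⟨x, Submodule.mem_top, y, Submodule.mem_top, rfl⟩
    exact hle hv₀V
  have hv₀H : v₀ ∈ H := hspan (hcomm hv₀comm)
  -- But `lam` vanishes on `H`, contradiction.
  have hHker : H ≤ LinearMap.ker lam := by
    rw [hH]
    refine sup_le (sup_le ?_ ?_) ?_
    · intro x hx
      rw [LinearMap.mem_ker]
      exact hlamV 1 (by omega) x (hPU hx)
    · exact inf_le_right
    · apply hWle
      intro t ht x hx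
      rw [LinearMap.mem_ker]
      exact hlamV t (by omega) x hx
  exact hlamv₀ (LinearMap.mem_ker.1 (hHker hv₀H))
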